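/- Let A be an MR-subalgebra of 𝓛ₙ, let Γᵢ = {a ∈ CoAt(A) : |𝒞ₐ| = i} for 1 ≤ i ≤ n, and let ψ be an automorphism of A. Then there exists an automorphism Φ of 𝓛ₙ with Φ[A] = A and Φ|A = ψ if and only if ψ[Γᵢ] = Γᵢ for all i. -/

import Mathlib

@[ext] structure Cube (n : ℕ) where
  pos : Finset (Fin n)
  neg : Finset (Fin n)
  disj : Disjoint pos neg

namespace Cube
variable {n : ℕ}

instance : PartialOrder (Cube n) where
  le x y := y.pos ⊆ x.pos ∧ y.neg ⊆ x.neg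
  le_refl x := ⟨subset_rfl, subset_rfl⟩
  le_trans x y z h₁ h₂ := ⟨h₂.1.trans h₁.1, h₂.2.trans h₁.2⟩
  le_antisymm x y h₁ h₂ :=
    Cube.ext (subset_antisymm h₂.1 h₁.1) (subset_antisymm h₂.2 h₁.2)

instance : OrderTop (Cube n) where
  top := ⟨∅, ∅, by simp⟩
  le_top x := ⟨Finset.empty_subset _, Finset.empty_subset _⟩

instance : SemilatticeSup (Cube n) where
  sup x y := ⟨x.pos ∩ y.pos, x.neg ∩ y.neg,
    x.disj.mono Finset.inter_subset_left Finset.inter_subset_left⟩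
  le_sup_left x y := ⟨Finset.inter_subset_left, Finset.inter_subset_left⟩
  le_sup_right x y := ⟨Finset.inter_subset_right, Finset.inter_subset_right⟩
  sup_le x y z hx hy := ⟨Finset.subset_inter hx.1 hy.1, Finset.subset_inter hx.2 hy.2⟩

/-- The reflection `Δ(x, y)` of `y` through the centre of `x`. -/
def delta (x y : Cube n) : Cube n :=
  ⟨x.pos ∪ (y.neg \ x.neg), x.neg ∪ (y.pos \ x.pos), by
    simp only [Finset.disjoint_union_left, Finset.disjoint_union_right]
    refine ⟨⟨x.disj, Finset.sdiff_disjoint⟩, Finset.disjoint_sdiff, ?_⟩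
    exact y.disj.symm.mono Finset.sdiff_subset Finset.sdiff_subset⟩

lemma delta_le (x y : Cube n) : delta x y ≤ x :=
  ⟨Finset.subset_union_left, Finset.subset_union_left⟩

/-- The co-rank of a face of the `n`-cube. -/
def corank (x : Cube n) : ℕ := (x.pos ∪ x.neg).card

/-- The set of coatoms of `𝓛ₙ` lying above `a`. -/
def coatomsAbove (a : Cube n) : Set (Cube n) := {c | corank c = 1 ∧ a ≤ c}

/-- `A` is an MR-subalgebra of `𝓛ₙ`. -/
def IsMRSub (A : Set (Cube n)) : Prop :=
  ⊤ ∈ A ∧ (∀ x ∈ A, ∀ y ∈ A, x ⊔ y ∈ A) ∧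
    (∀ x ∈ A, ∀ y ∈ A, y ≤ x → delta x y ∈ A) ∧
    (∀ x ∈ A, ∀ y ∈ A, ∃ m ∈ A, IsGLB {x, delta (x ⊔ y) y} m)

/-- The coatoms of a subalgebra `A`: maximal elements of `A \ {⊤}`. -/
def coAt (A : Set (Cube n)) : Set (Cube n) :=
  {a | a ∈ A ∧ a ≠ ⊤ ∧ ∀ b ∈ A, b ≠ ⊤ → a ≤ b → b = a}

/-- The coatoms `a` of `A` with `|𝒞ₐ| = i`. -/
def typeSet (A : Set (Cube n)) (i : ℕ) : Set (Cube n) :=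
  {a | a ∈ coAt A ∧ (coatomsAbove a).ncard = i}

/-- An order automorphism of `𝓛ₙ` is a cubic automorphism when it preserves `Δ`. -/
def IsAut (φ : Cube n ≃o Cube n) : Prop :=
  ∀ x y : Cube n, y ≤ x → φ (delta x y) = delta (φ x) (φ y)

/-- The set of automorphisms of `𝓛ₙ`. -/
def AutSet (n : ℕ) : Set (Cube n ≃o Cube n) := {φ | IsAut φ}

/-- An automorphism of the subposet `A` preserving `Δ`. -/
def IsSubAut {A : Set (Cube n)} (ψ : A ≃o A) : Prop :=
  ∀ (x y : A), (y : Cube n) ≤ (x : Cube n) → ∀ h : delta ↑x ↑y ∈ A,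
    (ψ ⟨delta ↑x ↑y, h⟩ : Cube n) = delta ↑(ψ x) ↑(ψ y)

end Cube
namespace Cube
variable {n : ℕ}

lemma le_def' {x y : Cube n} : x ≤ y ↔ y.pos ⊆ x.pos ∧ y.neg ⊆ x.neg := Iff.rfl

@[simp] lemma top_pos : (⊤ : Cube n).pos = ∅ := rfl
@[simp] lemma top_neg : (⊤ : Cube n).neg = ∅ := rfl
@[simp] lemma sup_pos (x y : Cube n) : (x ⊔ y).pos = x.pos ∩ y.pos := rfl
@[simp] lemma sup_neg (x y : Cube n) : (x ⊔ y).neg = x.neg ∩ y.neg := rfl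
@[simp] lemma delta_pos (x y : Cube n) : (delta x y).pos = x.pos ∪ (y.neg \ x.neg) := rfl
@[simp] lemma delta_neg (x y : Cube n) : (delta x y).neg = x.neg ∪ (y.pos \ x.pos) := rfl

/-- The support of a face. -/
def suppc (x : Cube n) : Finset (Fin n) := x.pos ∪ x.neg

lemma corank_eq_card_suppc (x : Cube n) : corank x = (suppc x).card := rfl

lemma suppc_subset {x y : Cube n} (h : x ≤ y) : suppc y ⊆ suppc x :=
  Finset.union_subset_union h.1 h.2

@[simp] lemma suppc_top : suppc (⊤ : Cube n) = ∅ := by simp [suppc]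

lemma eq_top_of_suppc {x : Cube n} (h : suppc x = ∅) : x = ⊤ := by
  rw [suppc, Finset.union_eq_empty] at h
  exact Cube.ext (by simp [h.1]) (by simp [h.2])

lemma suppc_ne_empty {x : Cube n} (h : x ≠ ⊤) : suppc x ≠ ∅ :=
  fun hs => h (eq_top_of_suppc hs)

lemma pos_not_neg {x : Cube n} {j : Fin n} (h : j ∈ x.pos) : j ∉ x.neg :=
  Finset.disjoint_left.mp x.disj h

lemma mem_suppc_iff {x : Cube n} {j : Fin n} : j ∈ suppc x ↔ j ∈ x.pos ∨ j ∈ x.neg :=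
  Finset.mem_union

/-- Reflection through the centre of the cube. -/
def star (x : Cube n) : Cube n := ⟨x.neg, x.pos, x.disj.symm⟩

@[simp] lemma star_pos (x : Cube n) : (star x).pos = x.neg := rfl
@[simp] lemma star_neg (x : Cube n) : (star x).neg = x.pos := rfl
@[simp] lemma star_star (x : Cube n) : star (star x) = x := rfl
@[simp] lemma suppc_star (x : Cube n) : suppc (star x) = suppc x := by
  simp [suppc, Finset.union_comm]

lemma delta_top_eq_star (x : Cube n) : delta ⊤ x = star x := by
  apply Cube.ext <;> simp [delta, star]

lemma star_le_star {x y : Cube n} (h : x ≤ y) : star x ≤ star y := ⟨h.2, h.1⟩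

lemma star_ne_top {x : Cube n} (h : x ≠ ⊤) : star x ≠ ⊤ := by
  intro hs
  exact h (eq_top_of_suppc (by rw [← suppc_star, hs, suppc_top]))

lemma star_injective : Function.Injective (star : Cube n → Cube n) := by
  intro a b h
  have := congrArg star h
  simpa using this

instance : Finite (Cube n) := by
  apply Finite.of_injective (fun x : Cube n => (x.pos, x.neg))
  rintro ⟨p, q, _⟩ ⟨p', q', _⟩ h
  simp only [Prod.mk.injEq] at h
  exact Cube.ext h.1 h.2

lemma eq_of_le_of_suppc {x y : Cube n} (h : x ≤ y) (hs : suppc x ⊆ suppc y) : y = x := by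
  refine le_antisymm (le_def'.mpr ⟨?_, ?_⟩) h
  · intro j hj
    have := hs (Finset.mem_union_left _ hj)
    rw [mem_suppc_iff] at this
    rcases this with h' | h'
    · exact h'
    · exact absurd (h.2 h') (pos_not_neg hj)
  · intro j hj
    have := hs (Finset.mem_union_right _ hj)
    rw [mem_suppc_iff] at this
    rcases this with h' | h'
    · exact absurd hj (pos_not_neg (h.1 h'))
    · exact h'

lemma corank_one_iff {c : Cube n} :
    corank c = 1 ↔ c ≠ ⊤ ∧ ∀ b, c ≤ b → b = c ∨ b = ⊤ := by
  constructor
  · intro h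
    constructor
    · intro ht; rw [ht] at h; simp [corank] at h
    · intro b hb
      rcases Finset.eq_empty_or_nonempty (suppc b) with he | hne
      · exact Or.inr (eq_top_of_suppc he)
      · left
        have hsub : suppc b ⊆ suppc c := suppc_subset hb
        have hc1 : (suppc c).card = 1 := (corank_eq_card_suppc c) ▸ h
        have hcard : (suppc b).card = 1 := le_antisymm
          (hc1 ▸ Finset.card_le_card hsub) (Finset.one_le_card.mpr hne)
        have hseq : suppc b = suppc c := Finset.eq_of_subset_of_card_le hsub
          (by rw [← corank_eq_card_suppc, h, hcard])
        exact eq_of_le_of_suppc hb (by rw [hseq])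
  · rintro ⟨ht, hmax⟩
    obtain ⟨j, hj⟩ := Finset.nonempty_iff_ne_empty.mpr (suppc_ne_empty ht)
    rw [mem_suppc_iff] at hj
    rcases hj with hj | hj
    · have hb : c ≤ (⟨{j}, ∅, by simp⟩ : Cube n) := ⟨by simpa using hj, by simp⟩
      rcases hmax _ hb with he | he
      · rw [← he]; simp [corank]
      · exact absurd (congrArg Cube.pos he) (by simp)
    · have hb : c ≤ (⟨∅, {j}, by simp⟩ : Cube n) := ⟨by simp, by simpa using hj⟩
      rcases hmax _ hb with he | he
      · rw [← he]; simp [corank]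
      · exact absurd (congrArg Cube.neg he) (by simp)

end Cube
namespace Cube
variable {n : ℕ}

lemma orderIso_top (φ : Cube n ≃o Cube n) : φ ⊤ = ⊤ := by
  apply le_antisymm le_top
  have h : φ.symm ⊤ ≤ ⊤ := le_top
  have := φ.monotone h
  rwa [φ.apply_symm_apply] at this

lemma corank_one_map (φ : Cube n ≃o Cube n) {c : Cube n} (h : corank c = 1) :
    corank (φ c) = 1 := by
  rw [corank_one_iff] at h ⊢
  obtain ⟨ht, hmax⟩ := h
  constructor
  · intro he
    apply ht
    have h2 := congrArg φ.symm he
    rwa [φ.symm_apply_apply, orderIso_top φ.symm] at h2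
  · intro b hb
    have h2 : c ≤ φ.symm b := by
      have := φ.symm.monotone hb
      rwa [φ.symm_apply_apply] at this
    rcases hmax _ h2 with he | he
    · left; rw [← φ.apply_symm_apply b, he]
    · right; rw [← φ.apply_symm_apply b, he, orderIso_top]

lemma coatomsAbove_map (φ : Cube n ≃o Cube n) (x : Cube n) :
    coatomsAbove (φ x) = φ '' coatomsAbove x := by
  ext c
  constructor
  · rintro ⟨h1, h2⟩
    refine ⟨φ.symm c, ⟨corank_one_map φ.symm h1, ?_⟩, φ.apply_symm_apply c⟩
    have := φ.symm.monotone h2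
    rwa [φ.symm_apply_apply] at this
  · rintro ⟨d, ⟨h1, h2⟩, rfl⟩
    exact ⟨corank_one_map φ h1, φ.monotone h2⟩

lemma ncard_coatomsAbove_map (φ : Cube n ≃o Cube n) (x : Cube n) :
    (coatomsAbove (φ x)).ncard = (coatomsAbove x).ncard := by
  rw [coatomsAbove_map, Set.ncard_image_of_injective _ φ.injective]

/-- `|𝒞ₐ| = corank a`. -/
lemma ncard_coatomsAbove (a : Cube n) : (coatomsAbove a).ncard = corank a := by
  classical
  have him : coatomsAbove a =
      (fun j : Fin n => if j ∈ a.pos then (⟨{j}, ∅, by simp⟩ : Cube n)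
        else ⟨∅, {j}, by simp⟩) '' (suppc a : Set (Fin n)) := by
    ext c
    constructor
    · rintro ⟨h1, h2⟩
      rw [corank_one_iff] at h1
      have hne := suppc_ne_empty h1.1
      obtain ⟨j, hj⟩ := Finset.nonempty_iff_ne_empty.mpr hne
      rw [mem_suppc_iff] at hj
      rcases hj with hj | hj
      · have hja : j ∈ a.pos := h2.1 hj
        refine ⟨j, by simp [suppc, hja], ?_⟩
        dsimp only
        rw [if_pos hja]
        have hle : c ≤ (⟨{j}, ∅, by simp⟩ : Cube n) := ⟨by simpa using hj, by simp⟩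
        rcases h1.2 _ hle with he | he
        · exact he
        · exact absurd (congrArg Cube.pos he) (by simp)
      · have hja : j ∈ a.neg := h2.2 hj
        refine ⟨j, by simp [suppc, hja], ?_⟩
        dsimp only
        rw [if_neg (fun hp => pos_not_neg hp hja)]
        have hle : c ≤ (⟨∅, {j}, by simp⟩ : Cube n) := ⟨by simp, by simpa using hj⟩
        rcases h1.2 _ hle with he | he
        · exact he
        · exact absurd (congrArg Cube.neg he) (by simp)
    · rintro ⟨j, hj, rfl⟩
      rw [Finset.mem_coe, mem_suppc_iff] at hj
      by_cases hp : j ∈ a.pos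
      · dsimp only
        rw [if_pos hp]
        exact ⟨by simp [corank], by simpa using hp, by simp⟩
      · have hn : j ∈ a.neg := hj.resolve_left hp
        dsimp only
        rw [if_neg hp]
        exact ⟨by simp [corank], by simp, by simpa using hn⟩
  rw [him, Set.ncard_image_of_injOn, Set.ncard_coe_finset, corank_eq_card_suppc]
  intro j hj k hk he
  rw [Finset.mem_coe, mem_suppc_iff] at hj hk
  by_cases hp : j ∈ a.pos <;> by_cases hq : k ∈ a.pos <;>
    simp only [if_pos, if_neg, hp, hq, if_true, if_false] at he
  · simpa using congrArg Cube.pos he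
  · exact absurd (congrArg Cube.pos he) (Finset.singleton_ne_empty j)
  · exact absurd (congrArg Cube.pos he) (Finset.singleton_ne_empty k).symm
  · simpa using congrArg Cube.neg he

variable {A : Set (Cube n)}

lemma subtype_top_fixed (hT : ⊤ ∈ A) (e : A ≃o A) : e ⟨⊤, hT⟩ = ⟨⊤, hT⟩ := by
  apply le_antisymm
  · exact Subtype.coe_le_coe.mp le_top
  · have h : e.symm ⟨⊤, hT⟩ ≤ ⟨⊤, hT⟩ := Subtype.coe_le_coe.mp le_top
    have := e.monotone h
    rwa [e.apply_symm_apply] at this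

lemma coAt_map (hT : ⊤ ∈ A) (e : A ≃o A) {a : A} (ha : ↑a ∈ coAt A) :
    ↑(e a) ∈ coAt A := by
  obtain ⟨haA, hat, hamax⟩ := ha
  refine ⟨(e a).2, ?_, ?_⟩
  · intro he
    have h1 : e a = e ⟨⊤, hT⟩ := (Subtype.ext he).trans (subtype_top_fixed hT e).symm
    exact hat (congrArg Subtype.val (e.injective h1))
  · intro b hbA hbt hab
    set b' := e.symm ⟨b, hbA⟩ with hb'
    have h2 : a ≤ b' := by
      have h3 : e a ≤ (⟨b, hbA⟩ : A) := Subtype.coe_le_coe.mp hab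
      have h4 := e.symm.monotone h3
      rwa [e.symm_apply_apply] at h4
    have h3 : (b' : Cube n) ≠ ⊤ := by
      intro he
      apply hbt
      have h4 : b' = ⟨⊤, hT⟩ := Subtype.ext he
      have h5 : (⟨b, hbA⟩ : A) = e ⟨⊤, hT⟩ := by rw [← h4, hb', e.apply_symm_apply]
      rw [subtype_top_fixed hT e] at h5
      exact congrArg Subtype.val h5
    have h4 := hamax _ b'.2 h3 (Subtype.coe_le_coe.mpr h2)
    have h5 : b' = a := Subtype.ext h4
    have h6 : (⟨b, hbA⟩ : A) = e a := by rw [← h5, hb', e.apply_symm_apply]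
    exact congrArg Subtype.val h6

end Cube
namespace Cube
variable {n : ℕ}

/-- The action of a signed permutation `(π, F)` on the cube. -/
def sact (π : Equiv.Perm (Fin n)) (F : Finset (Fin n)) (x : Cube n) : Cube n where
  pos := ((x.pos \ F) ∪ (x.neg ∩ F)).image π
  neg := ((x.neg \ F) ∪ (x.pos ∩ F)).image π
  disj := by
    rw [Finset.disjoint_left]
    rintro k hk hk'
    rw [Finset.mem_image] at hk hk'
    obtain ⟨j, hj, rfl⟩ := hk
    obtain ⟨j', hj', he⟩ := hk'
    cases π.injective he
    have hd := Finset.disjoint_left.mp x.disj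
    simp only [Finset.mem_union, Finset.mem_sdiff, Finset.mem_inter] at hj hj'
    tauto

lemma mem_sact_pos {π : Equiv.Perm (Fin n)} {F : Finset (Fin n)} {x : Cube n} {k : Fin n} :
    k ∈ (sact π F x).pos ↔
      ((π.symm k ∈ x.pos ∧ π.symm k ∉ F) ∨ (π.symm k ∈ x.neg ∧ π.symm k ∈ F)) := by
  simp only [sact, Finset.mem_image, Finset.mem_union, Finset.mem_sdiff, Finset.mem_inter]
  constructor
  · rintro ⟨j, hj, rfl⟩; simpa using hj
  · intro h; exact ⟨π.symm k, by simpa using h, by simp⟩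

lemma mem_sact_neg {π : Equiv.Perm (Fin n)} {F : Finset (Fin n)} {x : Cube n} {k : Fin n} :
    k ∈ (sact π F x).neg ↔
      ((π.symm k ∈ x.neg ∧ π.symm k ∉ F) ∨ (π.symm k ∈ x.pos ∧ π.symm k ∈ F)) := by
  simp only [sact, Finset.mem_image, Finset.mem_union, Finset.mem_sdiff, Finset.mem_inter]
  constructor
  · rintro ⟨j, hj, rfl⟩; simpa using hj
  · intro h; exact ⟨π.symm k, by simpa using h, by simp⟩

lemma sact_mono {π : Equiv.Perm (Fin n)} {F : Finset (Fin n)} {x y : Cube n}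
    (h : x ≤ y) : sact π F x ≤ sact π F y := by
  constructor
  · intro k hk
    rw [mem_sact_pos] at hk ⊢
    rcases hk with ⟨h1, h2⟩ | ⟨h1, h2⟩
    · exact Or.inl ⟨h.1 h1, h2⟩
    · exact Or.inr ⟨h.2 h1, h2⟩
  · intro k hk
    rw [mem_sact_neg] at hk ⊢
    rcases hk with ⟨h1, h2⟩ | ⟨h1, h2⟩
    · exact Or.inl ⟨h.2 h1, h2⟩
    · exact Or.inr ⟨h.1 h1, h2⟩

lemma mem_image_perm {π : Equiv.Perm (Fin n)} {F : Finset (Fin n)} {k : Fin n} :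
    k ∈ F.image π ↔ π.symm k ∈ F := by
  rw [Finset.mem_image]
  constructor
  · rintro ⟨j, hj, rfl⟩; simpa using hj
  · intro h; exact ⟨π.symm k, h, by simp⟩

lemma sact_sact_symm {π : Equiv.Perm (Fin n)} {F : Finset (Fin n)} (x : Cube n) :
    sact π.symm (F.image π) (sact π F x) = x := by
  have hd := Finset.disjoint_left.mp x.disj
  apply Cube.ext <;> ext k <;>
    simp only [mem_sact_pos, mem_sact_neg, mem_image_perm, Equiv.symm_symm,
      Equiv.apply_symm_apply, Equiv.symm_apply_apply] <;>
  · constructor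
    · intro h; rcases h with ⟨h1, h2⟩ | ⟨h1, h2⟩ <;> tauto
    · intro h
      by_cases hF : k ∈ F <;> tauto

lemma sact_symm_sact {π : Equiv.Perm (Fin n)} {F : Finset (Fin n)} (x : Cube n) :
    sact π F (sact π.symm (F.image π) x) = x := by
  have hd := Finset.disjoint_left.mp x.disj
  apply Cube.ext <;> ext k <;>
    simp only [mem_sact_pos, mem_sact_neg, mem_image_perm, Equiv.symm_symm,
      Equiv.apply_symm_apply, Equiv.symm_apply_apply] <;>
  · constructor
    · intro h; rcases h with ⟨h1, h2⟩ | ⟨h1, h2⟩ <;> tauto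
    · intro h
      by_cases hF : π.symm k ∈ F <;> tauto

/-- The order isomorphism of the cube induced by a signed permutation. -/
def sactIso (π : Equiv.Perm (Fin n)) (F : Finset (Fin n)) : Cube n ≃o Cube n where
  toFun := sact π F
  invFun := sact π.symm (F.image π)
  left_inv := sact_sact_symm
  right_inv := sact_symm_sact
  map_rel_iff' := by
    intro x y
    constructor
    · intro h
      change sact π F x ≤ sact π F y at h
      have h2 := sact_mono (π := π.symm) (F := F.image π) h
      rwa [sact_sact_symm, sact_sact_symm] at h2
    · exact sact_mono

@[simp] lemma sactIso_apply (π : Equiv.Perm (Fin n)) (F : Finset (Fin n)) (x : Cube n) :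
    sactIso π F x = sact π F x := rfl

lemma sact_delta (π : Equiv.Perm (Fin n)) (F : Finset (Fin n)) (x y : Cube n) :
    sact π F (delta x y) = delta (sact π F x) (sact π F y) := by
  have hdx := Finset.disjoint_left.mp x.disj
  have hdy := Finset.disjoint_left.mp y.disj
  apply Cube.ext <;> ext k <;>
    simp only [mem_sact_pos, mem_sact_neg, delta_pos, delta_neg, Finset.mem_union,
      Finset.mem_sdiff, mem_sact_pos, mem_sact_neg] <;>
  · constructor
    · intro h
      by_cases hF : π.symm k ∈ F <;> tauto
    · intro h
      by_cases hF : π.symm k ∈ F <;> tauto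

lemma sactIso_isAut (π : Equiv.Perm (Fin n)) (F : Finset (Fin n)) :
    IsAut (sactIso π F) := fun x y _ => sact_delta π F x y

end Cube
set_option maxHeartbeats 1000000 in
/-- An automorphism `ψ` of an MR-subalgebra `A` of `𝓛ₙ` extends to an
automorphism of `𝓛ₙ` stabilizing `A` iff `ψ[Γᵢ] = Γᵢ` for all `i`. -/
theorem extend_iff_typeSet_invariant (n : ℕ) (A : Set (Cube n)) (hA : Cube.IsMRSub A)
    (ψ : A ≃o A) (hψ : Cube.IsSubAut ψ) :
    (∃ φ ∈ Cube.AutSet n, φ '' A = A ∧ ∀ x : A, φ ↑x = ↑(ψ x)) ↔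
      ∀ i, (fun a : A => (ψ a : Cube n)) '' {a : A | (a : Cube n) ∈ Cube.typeSet A i} =
        Cube.typeSet A i := by
  classical
  open Cube in
  obtain ⟨hTop, hSup, hDelta, -⟩ := hA
  constructor
  · rintro ⟨φ, hφAut, hφA, hφψ⟩ i
    ext b
    constructor
    · rintro ⟨a, ha, rfl⟩
      obtain ⟨hco, hnc⟩ := ha
      refine ⟨coAt_map hTop ψ hco, ?_⟩
      have he : (↑(ψ a) : Cube n) = φ ↑a := (hφψ a).symm
      show (coatomsAbove (↑(ψ a) : Cube n)).ncard = i
      rw [he, ncard_coatomsAbove_map]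
      exact hnc
    · intro hb
      have hbA : b ∈ A := hb.1.1
      refine ⟨ψ.symm ⟨b, hbA⟩, ?_, ?_⟩
      · have hco := coAt_map hTop ψ.symm (a := ⟨b, hbA⟩) hb.1
        refine ⟨hco, ?_⟩
        have he : φ ↑(ψ.symm ⟨b, hbA⟩) = b := by
          rw [hφψ (ψ.symm ⟨b, hbA⟩), ψ.apply_symm_apply]
        have h2 := ncard_coatomsAbove_map φ (↑(ψ.symm ⟨b, hbA⟩) : Cube n)
        rw [he] at h2
        rw [← h2]
        exact hb.2
      · simp
  · intro hΓ
    -- ψ as a total function on the cube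
    set ψ' : Cube n → Cube n :=
      fun z => if h : z ∈ A then (ψ ⟨z, h⟩ : Cube n) else z with hψ'def
    have hψ'eq : ∀ (z) (hz : z ∈ A), ψ' z = ↑(ψ ⟨z, hz⟩) := fun z hz => dif_pos hz
    have hψ'mem : ∀ z ∈ A, ψ' z ∈ A := fun z hz => by
      rw [hψ'eq z hz]; exact (ψ ⟨z, hz⟩).2
    have hψ'le : ∀ z ∈ A, ∀ w ∈ A, (ψ' z ≤ ψ' w ↔ z ≤ w) := by
      intro z hz w hw
      rw [hψ'eq z hz, hψ'eq w hw]
      rw [Subtype.coe_le_coe, ψ.le_iff_le, Subtype.mk_le_mk]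
    have hψ'inj : ∀ z ∈ A, ∀ w ∈ A, ψ' z = ψ' w → z = w := by
      intro z hz w hw h
      rw [hψ'eq z hz, hψ'eq w hw] at h
      have := ψ.injective (Subtype.ext h)
      exact congrArg Subtype.val this
    have hstarA : ∀ z ∈ A, star z ∈ A := fun z hz =>
      delta_top_eq_star z ▸ hDelta ⊤ hTop z hz le_top
    have hψ'star : ∀ z ∈ A, ψ' (star z) = star (ψ' z) := by
      intro z hz
      have hd : delta ⊤ z ∈ A := hDelta ⊤ hTop z hz le_top
      have h1 := hψ ⟨⊤, hTop⟩ ⟨z, hz⟩ le_top hd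
      rw [subtype_top_fixed hTop ψ] at h1
      have h2 : ψ' (delta ⊤ z) = delta ⊤ (↑(ψ ⟨z, hz⟩)) := by
        rw [hψ'eq _ hd]; exact h1
      rw [← delta_top_eq_star, h2, delta_top_eq_star, hψ'eq z hz]
    have hψ'coAt : ∀ a ∈ coAt A, ψ' a ∈ coAt A := by
      intro a ha
      rw [hψ'eq a ha.1]
      exact coAt_map hTop ψ (a := ⟨a, ha.1⟩) ha
    have hψ'surjCoAt : ∀ b ∈ coAt A, ∃ a ∈ coAt A, ψ' a = b := by
      intro b hb
      refine ⟨↑(ψ.symm ⟨b, hb.1⟩), coAt_map hTop ψ.symm (a := ⟨b, hb.1⟩) hb, ?_⟩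
      rw [hψ'eq _ (ψ.symm ⟨b, hb.1⟩).2]
      simp
    have hcard : ∀ a ∈ coAt A, (suppc (ψ' a)).card = (suppc a).card := by
      intro a ha
      have hmem : ψ' a ∈ Cube.typeSet A ((coatomsAbove a).ncard) := by
        have h0 : (⟨a, ha.1⟩ : A) ∈
            {c : A | (c : Cube n) ∈ Cube.typeSet A ((coatomsAbove a).ncard)} := ⟨ha, rfl⟩
        have h1 : ψ' a ∈ (fun c : A => (ψ c : Cube n)) ''
            {c : A | (c : Cube n) ∈ Cube.typeSet A ((coatomsAbove a).ncard)} :=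
          ⟨⟨a, ha.1⟩, h0, (hψ'eq a ha.1).symm⟩
        rwa [hΓ _] at h1
      have h2 := hmem.2
      rw [ncard_coatomsAbove, ncard_coatomsAbove] at h2
      rw [← corank_eq_card_suppc, ← corank_eq_card_suppc]
      exact h2
    have hcoatom_max : ∀ a ∈ coAt A, ∀ y ∈ A, a ≤ y → y = a ∨ y = ⊤ := by
      intro a ha y hy hle
      by_cases h : y = ⊤
      · exact Or.inr h
      · exact Or.inl (ha.2.2 y hy h hle)
    have hblocks : ∀ a ∈ coAt A, ∀ b ∈ coAt A,
        ¬ Disjoint (suppc a) (suppc b) → b = a ∨ b = star a := by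
      intro a ha b hb hnd
      by_cases hba : b = a
      · exact Or.inl hba
      by_cases hbs : b = star a
      · exact Or.inr hbs
      exfalso
      apply hnd
      have h1 : a ⊔ b = ⊤ := by
        rcases hcoatom_max a ha _ (hSup a ha.1 b hb.1) le_sup_left with he | he
        · have h2 : b ≤ a := he ▸ le_sup_right
          exact absurd (hb.2.2 a ha.1 ha.2.1 h2).symm hba
        · exact he
      have h2 : a ⊔ star b = ⊤ := by
        have hsbA : star b ∈ A := hstarA b hb.1
        rcases hcoatom_max a ha _ (hSup a ha.1 (star b) hsbA) le_sup_left with he | he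
        · have h3 : star b ≤ a := he ▸ le_sup_right
          have h4 : b ≤ star a := by
            have := star_le_star h3
            rwa [star_star] at this
          have h5 := hb.2.2 (star a) (hstarA a ha.1) (star_ne_top ha.2.1) h4
          exact absurd h5.symm hbs
        · exact he
      have e1 := congrArg Cube.pos h1
      have e2 := congrArg Cube.neg h1
      have e3 := congrArg Cube.pos h2
      have e4 := congrArg Cube.neg h2
      simp only [sup_pos, sup_neg, star_pos, star_neg, top_pos, top_neg] at e1 e2 e3 e4
      rw [Finset.disjoint_left]
      intro j hj hjb
      rw [mem_suppc_iff] at hj hjb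
      rcases hj with hj | hj <;> rcases hjb with hjb | hjb
      · exact absurd (Finset.mem_inter.mpr ⟨hj, hjb⟩) (e1 ▸ Finset.notMem_empty j)
      · exact absurd (Finset.mem_inter.mpr ⟨hj, hjb⟩) (e3 ▸ Finset.notMem_empty j)
      · exact absurd (Finset.mem_inter.mpr ⟨hj, hjb⟩) (e4 ▸ Finset.notMem_empty j)
      · exact absurd (Finset.mem_inter.mpr ⟨hj, hjb⟩) (e2 ▸ Finset.notMem_empty j)
    -- Step B: every coordinate of an element of `A` is covered by a coatom of `A`
    have hcoatomAbove : ∀ x ∈ A, ∀ j, j ∈ suppc x → ∃ a ∈ coAt A, x ≤ a ∧ j ∈ suppc a := by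
      intro x hx j hj
      have hfin : {y : Cube n | y ∈ A ∧ x ≤ y ∧ j ∈ suppc y}.Finite := Set.toFinite _
      have hne : {y : Cube n | y ∈ A ∧ x ≤ y ∧ j ∈ suppc y}.Nonempty := ⟨x, hx, le_refl x, hj⟩
      obtain ⟨y, hyS, hymax⟩ := Set.Finite.exists_maximalFor id _ hfin hne
      obtain ⟨hyA, hxy, hjy⟩ := hyS
      refine ⟨y, ⟨hyA, ?_, ?_⟩, hxy, hjy⟩
      · intro he
        rw [he, suppc_top] at hjy
        exact Finset.notMem_empty j hjy
      · intro z hzA hzt hyz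
        by_contra hne'
        have hjz : j ∉ suppc z := by
          intro hjz
          exact hne' (le_antisymm (hymax ⟨hzA, le_trans hxy hyz, hjz⟩ hyz) hyz)
        have hwA : delta z y ∈ A := hDelta z hzA y hyA hyz
        have hswA : star (delta z y) ∈ A := hstarA _ hwA
        have huA : y ⊔ star (delta z y) ∈ A := hSup y hyA _ hswA
        have hyu : y ≤ y ⊔ star (delta z y) := le_sup_left
        have hdz := Finset.disjoint_left.mp z.disj
        have hdy := Finset.disjoint_left.mp y.disj
        -- j belongs to the support of u
        have hju : j ∈ suppc (y ⊔ star (delta z y)) := by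
          rw [mem_suppc_iff] at hjy hjz ⊢
          simp only [sup_pos, sup_neg, star_pos, star_neg, delta_pos, delta_neg,
            Finset.mem_inter, Finset.mem_union, Finset.mem_sdiff]
          tauto
        -- the support of u avoids the support of z
        have hdisj : ∀ k, k ∈ suppc z → k ∉ suppc (y ⊔ star (delta z y)) := by
          intro k hk
          have hk1 : k ∈ z.pos → k ∈ y.pos := fun h => hyz.1 h
          have hk2 : k ∈ z.neg → k ∈ y.neg := fun h => hyz.2 h
          rw [mem_suppc_iff] at hk ⊢
          simp only [sup_pos, sup_neg, star_pos, star_neg, delta_pos, delta_neg,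
            Finset.mem_inter, Finset.mem_union, Finset.mem_sdiff]
          rcases hk with hk | hk
          · have h1 := hk1 hk
            have h2 := hdy h1
            tauto
          · have h1 := hk2 hk
            have h2 := fun hp => hdy hp h1
            tauto
        have hueq : y = y ⊔ star (delta z y) :=
          le_antisymm hyu (hymax ⟨huA, le_trans hxy hyu, hju⟩ hyu)
        obtain ⟨k, hk⟩ := Finset.nonempty_iff_ne_empty.mpr (suppc_ne_empty hzt)
        have hky : k ∈ suppc y := suppc_subset hyz hk
        rw [hueq] at hky
        exact hdisj k hk hky
    have hposAbove : ∀ x ∈ A, ∀ j ∈ x.pos, ∃ a ∈ coAt A, x ≤ a ∧ j ∈ a.pos := by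
      intro x hx j hj
      obtain ⟨a, ha, hxa, hja⟩ := hcoatomAbove x hx j (mem_suppc_iff.mpr (Or.inl hj))
      refine ⟨a, ha, hxa, ?_⟩
      rcases mem_suppc_iff.mp hja with h | h
      · exact h
      · exact absurd (hxa.2 h) (pos_not_neg hj)
    have hnegAbove : ∀ x ∈ A, ∀ j ∈ x.neg, ∃ a ∈ coAt A, x ≤ a ∧ j ∈ a.neg := by
      intro x hx j hj
      obtain ⟨a, ha, hxa, hja⟩ := hcoatomAbove x hx j (mem_suppc_iff.mpr (Or.inr hj))
      refine ⟨a, ha, hxa, ?_⟩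
      rcases mem_suppc_iff.mp hja with h | h
      · exact absurd hj (pos_not_neg (hxa.1 h))
      · exact h
    -- choice of a coatom through each covered coordinate
    set P : Fin n → Prop := fun j => ∃ a, a ∈ coAt A ∧ j ∈ suppc a with hPdef
    set cA : Fin n → Cube n := fun j => if h : P j then h.choose else ⊤ with hcAdef
    have hcA : ∀ j, P j → cA j ∈ coAt A ∧ j ∈ suppc (cA j) := by
      intro j h
      rw [hcAdef]
      dsimp only
      rw [dif_pos h]
      exact h.choose_spec
    have hcA2 : ∀ j, ¬ P j → cA j = ⊤ := by
      intro j h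
      rw [hcAdef]
      dsimp only
      rw [dif_neg h]
    -- choice of a coatom with each possible support
    set Q : Finset (Fin n) → Prop := fun B => ∃ a, a ∈ coAt A ∧ suppc a = B with hQdef
    set cB : Finset (Fin n) → Cube n := fun B => if h : Q B then h.choose else ⊤ with hcBdef
    have hcB : ∀ B, Q B → cB B ∈ coAt A ∧ suppc (cB B) = B := by
      intro B h
      rw [hcBdef]
      dsimp only
      rw [dif_pos h]
      exact h.choose_spec
    set tgt : Finset (Fin n) → Finset (Fin n) := fun B => suppc (ψ' (cB B)) with htgtdef
    have htgt_card : ∀ B, Q B → (tgt B).card = B.card := by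
      intro B hQ
      obtain ⟨h1, h2⟩ := hcB B hQ
      rw [htgtdef]
      dsimp only
      rw [hcard _ h1, h2]
    have hsame : ∀ a ∈ coAt A, a = cB (suppc a) ∨ a = star (cB (suppc a)) := by
      intro a ha
      have hQ : Q (suppc a) := ⟨a, ha, rfl⟩
      obtain ⟨hb, hbs⟩ := hcB _ hQ
      have hnd : ¬ Disjoint (suppc (cB (suppc a))) (suppc a) := by
        rw [hbs, Finset.disjoint_self_iff_empty]
        exact suppc_ne_empty ha.2.1
      exact hblocks _ hb _ ha hnd
    have hsupp_psi : ∀ a ∈ coAt A, suppc (ψ' a) = tgt (suppc a) := by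
      intro a ha
      rcases hsame a ha with he | he
      · conv_lhs => rw [he]
      · conv_lhs => rw [he, hψ'star _ (hcB _ ⟨a, ha, rfl⟩).1.1, suppc_star]
    -- the underlying coordinate bijection
    set f : Fin n → Fin n := fun j =>
      if h : (suppc (cA j)).card = (tgt (suppc (cA j))).card ∧ j ∈ suppc (cA j)
      then ↑(Finset.equivOfCardEq h.1 ⟨j, h.2⟩) else j with hfdef
    have hfval : ∀ (B : Finset (Fin n)) (j : Fin n) (h1 : B.card = (tgt B).card)
        (h2 : j ∈ B), suppc (cA j) = B → f j = ↑(Finset.equivOfCardEq h1 ⟨j, h2⟩) := by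
      intro B j h1 h2 hB
      rw [hfdef]
      dsimp only
      rw [hB, dif_pos (⟨h1, h2⟩ : B.card = (tgt B).card ∧ j ∈ B)]
    have hf_mem : ∀ j, P j → f j ∈ tgt (suppc (cA j)) := by
      intro j h
      obtain ⟨h1, h2⟩ := hcA j h
      have hQ : Q (suppc (cA j)) := ⟨cA j, h1, rfl⟩
      have hc : (suppc (cA j)).card = (tgt (suppc (cA j))).card := (htgt_card _ hQ).symm
      rw [hfval _ j hc h2 rfl]
      exact Finset.coe_mem _
    have hf_id : ∀ j, ¬ P j → f j = j := by
      intro j h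
      rw [hfdef]
      dsimp only
      rw [dif_neg]
      rintro ⟨-, h2⟩
      rw [hcA2 j h, suppc_top] at h2
      exact Finset.notMem_empty j h2
    have hfP : ∀ j, P j → P (f j) := by
      intro j h
      have hm := hf_mem j h
      have hQ : Q (suppc (cA j)) := ⟨cA j, (hcA j h).1, rfl⟩
      rw [htgtdef] at hm
      exact ⟨ψ' (cB (suppc (cA j))), hψ'coAt _ (hcB _ hQ).1, hm⟩
    have hf_supp : ∀ a ∈ coAt A, ∀ j ∈ suppc a, f j ∈ suppc (ψ' a) := by
      intro a ha j hj
      have hPj : P j := ⟨a, ha, hj⟩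
      obtain ⟨hc1, hc2⟩ := hcA j hPj
      have hnd : ¬ Disjoint (suppc (cA j)) (suppc a) := fun hd =>
        (Finset.disjoint_left.mp hd hc2) hj
      have hcase := hblocks _ hc1 _ ha hnd
      have hseq : suppc a = suppc (cA j) := by
        rcases hcase with he | he <;> rw [he] <;> simp
      rw [hsupp_psi a ha, hseq]
      exact hf_mem j hPj
    have htgt_disj : ∀ B B', Q B → Q B' → ¬ Disjoint (tgt B) (tgt B') → B = B' := by
      intro B B' hB hB' hnd
      have h1 := hcB B hB
      have h2 := hcB B' hB'
      have h3 : ¬ Disjoint (suppc (ψ' (cB B))) (suppc (ψ' (cB B'))) := hnd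
      have hcase := hblocks _ (hψ'coAt _ h1.1) _ (hψ'coAt _ h2.1) h3
      rcases hcase with he | he
      · have := hψ'inj _ h2.1.1 _ h1.1.1 he
        rw [← h1.2, ← h2.2, this]
      · rw [← hψ'star _ h1.1.1] at he
        have := hψ'inj _ h2.1.1 _ (hstarA _ h1.1.1) he
        rw [← h1.2, ← h2.2, this, suppc_star]
    have hf_inj : Function.Injective f := by
      intro j j' he
      by_cases hj : P j <;> by_cases hj' : P j'
      · have m1 := hf_mem j hj
        have m2 := hf_mem j' hj'
        have hQ1 : Q (suppc (cA j)) := ⟨cA j, (hcA j hj).1, rfl⟩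
        have hQ2 : Q (suppc (cA j')) := ⟨cA j', (hcA j' hj').1, rfl⟩
        have hBB : suppc (cA j) = suppc (cA j') := by
          refine htgt_disj _ _ hQ1 hQ2 ?_
          intro hd
          exact Finset.disjoint_left.mp hd m1 (he ▸ m2)
        have hc : (suppc (cA j)).card = (tgt (suppc (cA j))).card := (htgt_card _ hQ1).symm
        have e1 := hfval (suppc (cA j)) j hc (hcA j hj).2 rfl
        have e2 := hfval (suppc (cA j)) j' hc (hBB ▸ (hcA j' hj').2) hBB.symm
        rw [e1, e2] at he
        have := (Finset.equivOfCardEq hc).injective (Subtype.ext he)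
        exact congrArg Subtype.val this
      · refine absurd ?_ hj'
        rw [← hf_id j' hj', ← he]
        exact hfP j hj
      · refine absurd ?_ hj
        rw [← hf_id j hj, he]
        exact hfP j' hj'
      · rw [hf_id j hj, hf_id j' hj'] at he
        exact he
    have hf_bij : Function.Bijective f := Finite.injective_iff_bijective.mp hf_inj
    set π : Equiv.Perm (Fin n) := Equiv.ofBijective f hf_bij with hπdef
    have hπ : ∀ j, π j = f j := fun j => rfl
    have hπsymm : ∀ k, f (π.symm k) = k := fun k => π.apply_symm_apply k
    have himg : ∀ a ∈ coAt A, (suppc a).image f = suppc (ψ' a) := by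
      intro a ha
      apply Finset.eq_of_subset_of_card_le
      · intro k hk
        rw [Finset.mem_image] at hk
        obtain ⟨j, hj, rfl⟩ := hk
        exact hf_supp a ha j hj
      · rw [Finset.card_image_of_injective _ hf_inj, hcard a ha]
    set F : Finset (Fin n) :=
      Finset.univ.filter (fun j => ¬ (j ∈ (cA j).pos ↔ f j ∈ (ψ' (cA j)).pos)) with hFdef
    have hF : ∀ j, j ∉ F ↔ (j ∈ (cA j).pos ↔ f j ∈ (ψ' (cA j)).pos) := by
      intro j
      rw [hFdef]
      simp
    have hsign : ∀ a ∈ coAt A, ∀ j ∈ suppc a,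
        (f j ∈ (ψ' a).pos ↔ ((j ∈ a.pos) ↔ j ∉ F)) := by
      intro a ha j hj
      have hPj : P j := ⟨a, ha, hj⟩
      obtain ⟨hc1, hc2⟩ := hcA j hPj
      have hnd : ¬ Disjoint (suppc (cA j)) (suppc a) := fun hd =>
        (Finset.disjoint_left.mp hd hc2) hj
      have hfs := hf_supp _ hc1 j hc2
      have hx1 : j ∈ (cA j).pos ∨ j ∈ (cA j).neg := mem_suppc_iff.mp hc2
      have hx2 : ¬ (j ∈ (cA j).pos ∧ j ∈ (cA j).neg) := fun h => pos_not_neg h.1 h.2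
      have hy1 : f j ∈ (ψ' (cA j)).pos ∨ f j ∈ (ψ' (cA j)).neg := mem_suppc_iff.mp hfs
      have hy2 : ¬ (f j ∈ (ψ' (cA j)).pos ∧ f j ∈ (ψ' (cA j)).neg) :=
        fun h => pos_not_neg h.1 h.2
      rcases hblocks _ hc1 _ ha hnd with he | he
      · rw [he, hF j]
        tauto
      · rw [he, hψ'star _ hc1.1, star_pos, star_pos, hF j]
        tauto
    have hsign_neg : ∀ a ∈ coAt A, ∀ j ∈ suppc a,
        (f j ∈ (ψ' a).neg ↔ ((j ∈ a.neg) ↔ j ∉ F)) := by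
      intro a ha j hj
      have hs := hsign a ha j hj
      have hfs := hf_supp a ha j hj
      have hx1 : j ∈ a.pos ∨ j ∈ a.neg := mem_suppc_iff.mp hj
      have hx2 : ¬ (j ∈ a.pos ∧ j ∈ a.neg) := fun h => pos_not_neg h.1 h.2
      have hy1 : f j ∈ (ψ' a).pos ∨ f j ∈ (ψ' a).neg := mem_suppc_iff.mp hfs
      have hy2 : ¬ (f j ∈ (ψ' a).pos ∧ f j ∈ (ψ' a).neg) := fun h => pos_not_neg h.1 h.2
      tauto
    have hmain : ∀ x ∈ A, sact π F x = ψ' x := by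
      intro x hx
      have hψx : ψ' x ∈ A := hψ'mem x hx
      have hcoe : ∀ y : Cube n, (sact π F y).pos = ((y.pos \ F) ∪ (y.neg ∩ F)).image π :=
        fun y => rfl
      apply Cube.ext
      · ext k
        rw [mem_sact_pos]
        have hfl : f (π.symm k) = k := hπsymm k
        constructor
        · rintro (⟨h1, h2⟩ | ⟨h1, h2⟩)
          · obtain ⟨a, ha, hxa, hla⟩ := hposAbove x hx _ h1
            have hjs : π.symm k ∈ suppc a := mem_suppc_iff.mpr (Or.inl hla)
            have hm := (hsign a ha _ hjs).mpr (iff_of_true hla h2)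
            rw [hfl] at hm
            have hle : ψ' x ≤ ψ' a := (hψ'le x hx a ha.1).mpr hxa
            exact hle.1 hm
          · obtain ⟨a, ha, hxa, hla⟩ := hnegAbove x hx _ h1
            have hjs : π.symm k ∈ suppc a := mem_suppc_iff.mpr (Or.inr hla)
            have hnp : π.symm k ∉ a.pos := fun hp => pos_not_neg hp hla
            have hm := (hsign a ha _ hjs).mpr (iff_of_false hnp (not_not_intro h2))
            rw [hfl] at hm
            have hle : ψ' x ≤ ψ' a := (hψ'le x hx a ha.1).mpr hxa
            exact hle.1 hm
        · intro hk
          obtain ⟨b, hb, hxb, hkb⟩ := hposAbove (ψ' x) hψx k hk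
          obtain ⟨a, ha, hab⟩ := hψ'surjCoAt b hb
          have hxa : x ≤ a := by
            rw [← hψ'le x hx a ha.1, hab]
            exact hxb
          have hkb' : k ∈ (ψ' a).pos := by rw [hab]; exact hkb
          have hksupp : k ∈ suppc (ψ' a) := mem_suppc_iff.mpr (Or.inl hkb')
          rw [← himg a ha, Finset.mem_image] at hksupp
          obtain ⟨j, hj, hfj⟩ := hksupp
          have hjl : j = π.symm k := hf_inj (by rw [hfj, hfl])
          rw [hjl] at hj
          have hs := (hsign a ha _ hj).mp (by rw [hfl]; exact hkb')
          by_cases hFl : π.symm k ∈ F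
          · refine Or.inr ⟨?_, hFl⟩
            have hnp : π.symm k ∉ a.pos := fun hp => (hs.mp hp) hFl
            exact hxa.2 ((mem_suppc_iff.mp hj).resolve_left hnp)
          · exact Or.inl ⟨hxa.1 (hs.mpr hFl), hFl⟩
      · ext k
        rw [mem_sact_neg]
        have hfl : f (π.symm k) = k := hπsymm k
        constructor
        · rintro (⟨h1, h2⟩ | ⟨h1, h2⟩)
          · obtain ⟨a, ha, hxa, hla⟩ := hnegAbove x hx _ h1
            have hjs : π.symm k ∈ suppc a := mem_suppc_iff.mpr (Or.inr hla)
            have hm := (hsign_neg a ha _ hjs).mpr (iff_of_true hla h2)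
            rw [hfl] at hm
            have hle : ψ' x ≤ ψ' a := (hψ'le x hx a ha.1).mpr hxa
            exact hle.2 hm
          · obtain ⟨a, ha, hxa, hla⟩ := hposAbove x hx _ h1
            have hjs : π.symm k ∈ suppc a := mem_suppc_iff.mpr (Or.inl hla)
            have hnp : π.symm k ∉ a.neg := pos_not_neg hla
            have hm := (hsign_neg a ha _ hjs).mpr (iff_of_false hnp (not_not_intro h2))
            rw [hfl] at hm
            have hle : ψ' x ≤ ψ' a := (hψ'le x hx a ha.1).mpr hxa
            exact hle.2 hm
        · intro hk
          obtain ⟨b, hb, hxb, hkb⟩ := hnegAbove (ψ' x) hψx k hk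
          obtain ⟨a, ha, hab⟩ := hψ'surjCoAt b hb
          have hxa : x ≤ a := by
            rw [← hψ'le x hx a ha.1, hab]
            exact hxb
          have hkb' : k ∈ (ψ' a).neg := by rw [hab]; exact hkb
          have hksupp : k ∈ suppc (ψ' a) := mem_suppc_iff.mpr (Or.inr hkb')
          rw [← himg a ha, Finset.mem_image] at hksupp
          obtain ⟨j, hj, hfj⟩ := hksupp
          have hjl : j = π.symm k := hf_inj (by rw [hfj, hfl])
          rw [hjl] at hj
          have hs := (hsign_neg a ha _ hj).mp (by rw [hfl]; exact hkb')
          by_cases hFl : π.symm k ∈ F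
          · refine Or.inr ⟨?_, hFl⟩
            have hnn : π.symm k ∉ a.neg := fun hp => (hs.mp hp) hFl
            exact hxa.1 ((mem_suppc_iff.mp hj).resolve_right hnn)
          · exact Or.inl ⟨hxa.2 (hs.mpr hFl), hFl⟩
    refine ⟨sactIso π F, sactIso_isAut π F, ?_, ?_⟩
    · ext z
      constructor
      · rintro ⟨x, hx, rfl⟩
        rw [sactIso_apply, hmain x hx]
        exact hψ'mem x hx
      · intro hz
        refine ⟨↑(ψ.symm ⟨z, hz⟩), (ψ.symm ⟨z, hz⟩).2, ?_⟩
        rw [sactIso_apply, hmain _ (ψ.symm ⟨z, hz⟩).2, hψ'eq _ (ψ.symm ⟨z, hz⟩).2]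
        simp
    · intro x
      rw [sactIso_apply, hmain ↑x x.2, hψ'eq ↑x x.2]
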